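/- The complementary error function erfc(x) := (2/√π) ∫_x^∞ e^{-ξ²} dξ satisfies erfc(x) ≤ (2/√π) · e^{-x²} / (x + √(x² + 4/π)) ≤ e^{-x²} for all x ≥ 0. -/

import Mathlib

/-- The complementary error function `erfc x = (2/√π) ∫_x^∞ e^{-ξ²} dξ`. -/
noncomputable def erfc (x : ℝ) : ℝ :=
  (2 / Real.sqrt Real.pi) * ∫ ξ in Set.Ioi x, Real.exp (-ξ ^ 2)

open MeasureTheory Set Filter Real

noncomputable def cc : ℝ := 4 / Real.pi
noncomputable def J (x : ℝ) : ℝ := Real.sqrt Real.pi / 2 - ∫ t in (0:ℝ)..x, Real.exp (-t^2)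
noncomputable def H (x : ℝ) : ℝ := Real.exp (-x^2) / (x + Real.sqrt (x^2 + cc))
noncomputable def G (x : ℝ) : ℝ := J x - H x
noncomputable def aa : ℝ := cc - 1
noncomputable def x1 : ℝ := Real.sqrt (aa^2 * cc / (1 - aa^2))

lemma hc1 : 1 < cc := by
  rw [cc, lt_div_iff₀ Real.pi_pos]; nlinarith [Real.pi_lt_d2]
lemma hc2 : cc < 2 := by
  rw [cc, div_lt_iff₀ Real.pi_pos]; nlinarith [Real.pi_gt_three]
lemma hc0 : 0 < cc := by linarith [hc1]
lemma ha0 : 0 < aa := by rw [aa]; linarith [hc1]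
lemma ha1 : aa < 1 := by rw [aa]; linarith [hc2]

lemma integrable_integrand : Integrable fun t : ℝ => Real.exp (-t^2) := by
  have := integrable_exp_neg_mul_sq (one_pos)
  simpa using this

lemma s_pos (x : ℝ) : 0 < Real.sqrt (x^2 + cc) := Real.sqrt_pos.2 (by nlinarith [sq_nonneg x, hc0])
lemma s_sq (x : ℝ) : (Real.sqrt (x^2 + cc))^2 = x^2 + cc := Real.sq_sqrt (by nlinarith [sq_nonneg x, hc0])
lemma w_pos (x : ℝ) : 0 < x + Real.sqrt (x^2 + cc) := by
  have h := Real.sqrt_lt_sqrt (sq_nonneg x) (lt_add_of_pos_right (x^2) hc0)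
  rw [Real.sqrt_sq_eq_abs] at h
  have := neg_abs_le x
  linarith

lemma x1_nonneg : 0 ≤ x1 := Real.sqrt_nonneg _
lemma x1_sq : x1^2 = aa^2 * cc / (1 - aa^2) := by
  apply Real.sq_sqrt
  have := ha0; have := ha1; have := hc0
  apply div_nonneg (by nlinarith) (by nlinarith)

lemma signA {x : ℝ} (hx : 0 ≤ x) (hxe : x ≤ x1) : 1 + x / Real.sqrt (x^2+cc) - cc ≤ 0 := by
  have hs := s_pos x
  have hsq := s_sq x
  have hx2 : x^2 ≤ x1^2 := by nlinarith
  rw [x1_sq] at hx2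
  have ha0 := ha0; have ha1 := ha1; have hc0 := hc0
  have h1 : x^2 * (1 - aa^2) ≤ aa^2 * cc := by
    rwa [le_div_iff₀ (by nlinarith : (0:ℝ) < 1 - aa^2)] at hx2
  have h2 : x ≤ aa * Real.sqrt (x^2+cc) := by nlinarith [mul_pos ha0 hs]
  have h3 : x / Real.sqrt (x^2+cc) ≤ aa := by
    rw [div_le_iff₀ hs]; linarith
  rw [aa] at h3; linarith

lemma signB {x : ℝ} (hxe : x1 ≤ x) : 0 ≤ 1 + x / Real.sqrt (x^2+cc) - cc := by
  have hx : 0 ≤ x := le_trans x1_nonneg hxe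
  have hs := s_pos x
  have hsq := s_sq x
  have hx2 : x1^2 ≤ x^2 := by nlinarith [x1_nonneg]
  rw [x1_sq] at hx2
  have ha0 := ha0; have ha1 := ha1; have hc0 := hc0
  have h1 : aa^2 * cc ≤ x^2 * (1 - aa^2) := by
    rw [div_le_iff₀ (by nlinarith : (0:ℝ) < 1 - aa^2)] at hx2; nlinarith
  have h2 : aa * Real.sqrt (x^2+cc) ≤ x := by nlinarith [mul_pos ha0 hs]
  have h3 : aa ≤ x / Real.sqrt (x^2+cc) := by
    rw [le_div_iff₀ hs]; linarith
  rw [aa] at h3; linarith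

lemma Jderiv (x : ℝ) : HasDerivAt J (-(Real.exp (-x^2))) x := by
  have hcont : Continuous fun t : ℝ => Real.exp (-t^2) := by fun_prop
  have h : HasDerivAt (fun u => ∫ t in (0:ℝ)..u, Real.exp (-t^2)) (Real.exp (-x^2)) x :=
    intervalIntegral.integral_hasDerivAt_right (hcont.intervalIntegrable _ _)
      (hcont.stronglyMeasurableAtFilter _ _) hcont.continuousAt
  exact ((hasDerivAt_const x (Real.sqrt Real.pi / 2)).sub h).congr_deriv (zero_sub _)

lemma Gderiv (x : ℝ) : HasDerivAt G
    (Real.exp (-x^2) * ((1 + x / Real.sqrt (x^2+cc)) - cc) / (x + Real.sqrt (x^2+cc))^2) x := by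
  have h1 : HasDerivAt (fun y : ℝ => y^2 + cc) (2*x) x := by
    simpa using ((hasDerivAt_pow 2 x).add_const cc)
  have h2 : HasDerivAt (fun y : ℝ => Real.sqrt (y^2 + cc)) (2*x / (2 * Real.sqrt (x^2+cc))) x :=
    h1.sqrt (ne_of_gt (by nlinarith [sq_nonneg x, hc0] : (0:ℝ) < x^2 + cc))
  have h3 : HasDerivAt (fun y : ℝ => y + Real.sqrt (y^2 + cc)) (1 + 2*x / (2 * Real.sqrt (x^2+cc))) x :=
    (hasDerivAt_id x).add h2
  have h4 : HasDerivAt (fun y : ℝ => Real.exp (-y^2)) (-(2*x) * Real.exp (-x^2)) x := by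
    have : HasDerivAt (fun y : ℝ => -y^2) (-(2*x)) x := by
      exact (hasDerivAt_pow 2 x).neg.congr_deriv (by norm_num)
    simpa [mul_comm] using this.exp
  have h5 : HasDerivAt H _ x := h4.div h3 (ne_of_gt (w_pos x))
  have h6 := (Jderiv x).sub h5
  refine HasDerivAt.congr_deriv h6 ?_
  symm
  have hs := s_pos x
  have hsq := s_sq x
  have hw := w_pos x
  rw [show 2*x / (2 * Real.sqrt (x^2+cc)) = x / Real.sqrt (x^2+cc) by
    rw [mul_div_mul_left _ _ (two_ne_zero)]]
  field_simp
  ring_nf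
  linear_combination (Real.sqrt (x^2+cc)) * hsq

lemma contG : Continuous G :=
  continuous_iff_continuousAt.2 fun x => (Gderiv x).differentiableAt.continuousAt

lemma G_anti : AntitoneOn G (Icc 0 x1) := by
  apply antitoneOn_of_deriv_nonpos (convex_Icc 0 x1) contG.continuousOn
  · exact fun x _ => (Gderiv x).differentiableAt.differentiableWithinAt
  · intro x hx
    rw [interior_Icc, mem_Ioo] at hx
    rw [(Gderiv x).deriv]
    apply div_nonpos_of_nonpos_of_nonneg _ (sq_nonneg _)
    exact mul_nonpos_of_nonneg_of_nonpos (Real.exp_pos _).le (signA hx.1.le hx.2.le)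

lemma G_mono : MonotoneOn G (Ici x1) := by
  apply monotoneOn_of_deriv_nonneg (convex_Ici x1) contG.continuousOn
  · exact fun x _ => (Gderiv x).differentiableAt.differentiableWithinAt
  · intro x hx
    rw [interior_Ici, mem_Ioi] at hx
    rw [(Gderiv x).deriv]
    apply div_nonneg _ (sq_nonneg _)
    exact mul_nonneg (Real.exp_pos _).le (signB hx.le)

lemma sqrt_cc : Real.sqrt cc = 2 / Real.sqrt Real.pi := by
  rw [show cc = (2 / Real.sqrt Real.pi)^2 by
    rw [div_pow, Real.sq_sqrt Real.pi_pos.le]; norm_num [cc]]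
  exact Real.sqrt_sq (by positivity)

lemma G_zero : G 0 = 0 := by
  have hpi := Real.pi_pos
  have : Real.sqrt Real.pi > 0 := Real.sqrt_pos.2 hpi
  simp only [G, J, H, intervalIntegral.integral_same]
  rw [show (0:ℝ)^2 + cc = cc by norm_num, sqrt_cc]
  field_simp
  simp

lemma gauss_Ioi : (∫ t in Ioi (0:ℝ), Real.exp (-t^2)) = Real.sqrt Real.pi / 2 := by
  simpa using integral_gaussian_Ioi 1

lemma G_tendsto : Tendsto G atTop (nhds 0) := by
  have hJ : Tendsto J atTop (nhds 0) := by
    have h := intervalIntegral_tendsto_integral_Ioi 0 integrable_integrand.integrableOn tendsto_id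
    rw [gauss_Ioi] at h
    have := h.const_sub (Real.sqrt Real.pi / 2)
    rw [sub_self] at this
    exact this
  have hexp : Tendsto (fun x : ℝ => Real.exp (-x^2)) atTop (nhds 0) := by
    apply Real.tendsto_exp_atBot.comp
    exact tendsto_neg_atBot_iff.2 (tendsto_pow_atTop two_ne_zero)
  have hH : Tendsto H atTop (nhds 0) := by
    apply squeeze_zero' (Eventually.of_forall fun x => div_nonneg (Real.exp_pos _).le (w_pos x).le)
      _ (by simpa using hexp.div_const (Real.sqrt cc))
    filter_upwards [eventually_ge_atTop (0:ℝ)] with x hx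
    apply div_le_div_of_nonneg_left (Real.exp_pos _).le (Real.sqrt_pos.2 hc0)
    calc Real.sqrt cc ≤ Real.sqrt (x^2 + cc) := Real.sqrt_le_sqrt (by nlinarith)
      _ ≤ x + Real.sqrt (x^2 + cc) := by linarith
  have := hJ.sub hH
  rw [sub_zero] at this
  exact this

lemma G_nonpos {x : ℝ} (hx : 0 ≤ x) : G x ≤ 0 := by
  rcases le_total x x1 with h | h
  · have := G_anti (left_mem_Icc.2 x1_nonneg) ⟨hx, h⟩ hx
    rwa [G_zero] at this
  · apply ge_of_tendsto G_tendsto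
    filter_upwards [eventually_ge_atTop x] with y hy
    exact G_mono (mem_Ici.2 h) (mem_Ici.2 (h.trans hy)) hy

lemma I_eq_J {x : ℝ} (hx : 0 ≤ x) : (∫ t in Ioi x, Real.exp (-t^2)) = J x := by
  have h := setIntegral_union (s := Ioc 0 x) (t := Ioi x) (Ioc_disjoint_Ioi (le_refl x)) measurableSet_Ioi
    integrable_integrand.integrableOn integrable_integrand.integrableOn
  rw [Ioc_union_Ioi_eq_Ioi hx] at h
  rw [J, intervalIntegral.integral_of_le hx, ← gauss_Ioi, h]
  ring

/-- `erfc x ≤ (2/√π) e^{-x²}/(x + √(x² + 4/π)) ≤ e^{-x²}` for all `x ≥ 0`. -/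
theorem stmt4 (x : ℝ) (hx : 0 ≤ x) :
    erfc x ≤ (2 / Real.sqrt Real.pi) *
        (Real.exp (-x ^ 2) / (x + Real.sqrt (x ^ 2 + 4 / Real.pi))) ∧
      (2 / Real.sqrt Real.pi) *
        (Real.exp (-x ^ 2) / (x + Real.sqrt (x ^ 2 + 4 / Real.pi))) ≤ Real.exp (-x ^ 2) := by
  have hcc : (4:ℝ) / Real.pi = cc := rfl
  have hJH : J x ≤ H x := by have := G_nonpos hx; rw [G] at this; linarith
  have hsp : (0:ℝ) < 2 / Real.sqrt Real.pi := by
    have := Real.sqrt_pos.2 Real.pi_pos; positivity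
  constructor
  · rw [erfc, hcc, I_eq_J hx]
    exact mul_le_mul_of_nonneg_left (by rw [H] at hJH; exact hJH) hsp.le
  · rw [hcc]
    have hw := w_pos x
    have hwge : 2 / Real.sqrt Real.pi ≤ x + Real.sqrt (x^2 + cc) := by
      rw [← sqrt_cc]
      calc Real.sqrt cc ≤ Real.sqrt (x^2 + cc) := Real.sqrt_le_sqrt (by nlinarith)
        _ ≤ x + Real.sqrt (x^2 + cc) := by linarith
    have h1 : (2 / Real.sqrt Real.pi) / (x + Real.sqrt (x^2 + cc)) ≤ 1 :=
      (div_le_one hw).2 hwge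
    calc (2 / Real.sqrt Real.pi) * (Real.exp (-x^2) / (x + Real.sqrt (x^2 + cc)))
        = Real.exp (-x^2) * ((2 / Real.sqrt Real.pi) / (x + Real.sqrt (x^2 + cc))) := by ring
      _ ≤ Real.exp (-x^2) * 1 := mul_le_mul_of_nonneg_left h1 (Real.exp_pos _).le
      _ = Real.exp (-x^2) := mul_one _
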